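/- The algebra A(q), regarded with its Z-grading in which each x_i has degree 1, is n-graded Frobenius, and it is not j-graded Frobenius for any integer j ≠ n. -/

import Mathlib

open Finset

inductive AqRel (K : Type) [Field K] (n : ℕ) (q : Fin n → Fin n → K) :
    FreeAlgebra K (Fin n) → FreeAlgebra K (Fin n) → Prop
  | comm : ∀ i j : Fin n, i < j →
      AqRel K n q (FreeAlgebra.ι K j * FreeAlgebra.ι K i)
        (q i j • (FreeAlgebra.ι K i * FreeAlgebra.ι K j))
  | sq : ∀ i : Fin n, AqRel K n q (FreeAlgebra.ι K i * FreeAlgebra.ι K i) 0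

abbrev Aq (K : Type) [Field K] (n : ℕ) (q : Fin n → Fin n → K) : Type :=
  RingQuot (AqRel K n q)

noncomputable def xq (K : Type) [Field K] (n : ℕ) (q : Fin n → Fin n → K) (i : Fin n) :
    Aq K n q :=
  RingQuot.mkAlgHom K (AqRel K n q) (FreeAlgebra.ι K i)

noncomputable def eq' (K : Type) [Field K] (n : ℕ) (q : Fin n → Fin n → K)
    (g : Fin n → ZMod 2) : Aq K n q :=
  ((List.finRange n).map (fun i => if g i = 1 then xq K n q i else 1)).prod

/-- The homogeneous component of degree `d ∈ ℤ` of `A(q)` for the `ℤ`-grading in which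
each `x_i` has degree `1`: the span of the monomials `e_g` with `|supp g| = d`. -/
noncomputable def AqGradeZ (K : Type) [Field K] (n : ℕ) (q : Fin n → Fin n → K)
    (d : ℤ) : Submodule K (Aq K n q) :=
  Submodule.span K
    (eq' K n q '' {g : Fin n → ZMod 2 | ((univ.filter fun i => g i = 1).card : ℤ) = d})

/-- `A(q)` is `σ`-graded Frobenius for the `ℤ`-grading, unfolded. -/
def AqZFrobenius (K : Type) [Field K] (n : ℕ) (q : Fin n → Fin n → K) (σ : ℤ) : Prop :=
  ∃ φ : Aq K n q ≃ₗ[K] Module.Dual K (Aq K n q),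
    (∀ a x y : Aq K n q, φ (a * x) y = φ x (y * a)) ∧
    (∀ d : ℤ, ∀ x ∈ AqGradeZ K n q (d + σ),
      ∀ h : ℤ, h ≠ -d → ∀ y ∈ AqGradeZ K n q h, φ x y = 0)

namespace AqAux

variable (K : Type) [Field K] (n : ℕ) (q : Fin n → Fin n → K)

/-- Representation space. -/
abbrev V := Finset (Fin n) → K

/-- The operator modelling left multiplication by `x_i`. -/
noncomputable def Lop (i : Fin n) : Module.End K (V K n) where
  toFun f := fun S => if i ∈ S then (∏ j ∈ S.filter (· < i), q j i) * f (S.erase i) else 0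
  map_add' f g := by
    funext S
    by_cases h : i ∈ S <;> simp [h, mul_add]
  map_smul' c f := by
    funext S
    by_cases h : i ∈ S <;> simp [h] <;> ring

lemma Lop_sq (i : Fin n) : Lop K n q i * Lop K n q i = 0 := by
  apply LinearMap.ext; intro f; funext S
  simp only [Module.End.mul_apply, Lop, LinearMap.coe_mk, AddHom.coe_mk, LinearMap.zero_apply,
    Pi.zero_apply]
  by_cases h : i ∈ S
  · simp [h, Finset.notMem_erase]
  · simp [h]

lemma Lop_comm (i j : Fin n) (hij : i < j) :
    Lop K n q j * Lop K n q i = q i j • (Lop K n q i * Lop K n q j) := by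
  apply LinearMap.ext; intro f; funext S
  simp only [Module.End.mul_apply, Lop, LinearMap.coe_mk, AddHom.coe_mk, LinearMap.smul_apply,
    Pi.smul_apply, smul_eq_mul]
  by_cases hi : i ∈ S <;> by_cases hj : j ∈ S
  · have hij' : i ≠ j := ne_of_lt hij
    have h1 : i ∈ S.erase j := Finset.mem_erase.2 ⟨hij', hi⟩
    have h2 : j ∈ S.erase i := Finset.mem_erase.2 ⟨(ne_of_lt hij).symm, hj⟩
    simp only [hj, if_true, h1, if_true, hi, h2]
    have e1 : (S.erase j).filter (· < i) = S.filter (· < i) := by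
      ext k
      simp only [Finset.mem_filter, Finset.mem_erase]
      constructor
      · rintro ⟨⟨_, hk⟩, hk2⟩; exact ⟨hk, hk2⟩
      · rintro ⟨hk, hk2⟩; exact ⟨⟨by rintro rfl; exact absurd (hk2.trans hij) (lt_irrefl _), hk⟩, hk2⟩
    have e3 : S.filter (· < j) = insert i ((S.erase i).filter (· < j)) := by
      ext k
      simp only [Finset.mem_filter, Finset.mem_insert, Finset.mem_erase]
      constructor
      · rintro ⟨hk, hk2⟩
        by_cases hki : k = i
        · exact Or.inl hki
        · exact Or.inr ⟨⟨hki, hk⟩, hk2⟩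
      · rintro (rfl | ⟨⟨_, hk⟩, hk2⟩)
        · exact ⟨hi, hij⟩
        · exact ⟨hk, hk2⟩
    have e4 : (∏ k ∈ S.filter (· < j), q k j)
        = q i j * ∏ k ∈ (S.erase i).filter (· < j), q k j := by
      rw [e3, Finset.prod_insert (by simp [Finset.notMem_erase])]
    rw [e1, e4, Finset.erase_right_comm]
    ring
  · simp only [hj, if_false, mul_zero, hi, if_true]
    have : j ∉ S.erase i := fun h => hj (Finset.mem_of_mem_erase h)
    simp [this]
  · simp only [hj, if_true, hi]
    have : i ∉ S.erase j := fun h => hi (Finset.mem_of_mem_erase h)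
    simp [this, hi]
  · simp [hi, hj]

/-- The representation of `A(q)` on `V`. -/
noncomputable def rep : Aq K n q →ₐ[K] Module.End K (V K n) :=
  RingQuot.liftAlgHom K ⟨FreeAlgebra.lift K (Lop K n q), by
    rintro a b (⟨i, j, hij⟩ | ⟨i⟩) <;>
      simp only [map_mul, map_smul, map_zero, FreeAlgebra.lift_ι_apply]
    · exact Lop_comm K n q i j hij
    · exact Lop_sq K n q i⟩

lemma rep_xq (i : Fin n) : rep K n q (xq K n q i) = Lop K n q i := by
  rw [xq, rep, RingQuot.liftAlgHom_mkAlgHom_apply, FreeAlgebra.lift_ι_apply]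

/-- Product of generators indexed by a list. -/
noncomputable def P (l : List (Fin n)) : Aq K n q := (l.map (xq K n q)).prod

/-- The monomial attached to a finite set of indices. -/
noncomputable def eS (S : Finset (Fin n)) : Aq K n q := P K n q (S.sort (· ≤ ·))

lemma P_nil : P K n q [] = 1 := rfl

lemma P_cons (i : Fin n) (l : List (Fin n)) :
    P K n q (i :: l) = xq K n q i * P K n q l := by
  simp [P]

lemma sort_eq_of_sorted {l : List (Fin n)} (hl : l.Pairwise (· < ·)) :
    l.toFinset.sort (· ≤ ·) = l := by
  exact List.Perm.eq_of_sortedLE (Finset.pairwise_sort _ _).sortedLE hl.sortedLT.sortedLE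
    (List.perm_of_nodup_nodup_toFinset_eq
    (Finset.sort_nodup _ _) hl.nodup (by simp [Finset.sort_toFinset]))

lemma eS_empty : eS K n q ∅ = 1 := by simp [eS, Finset.sort_empty, P_nil]

lemma xq_sq (i : Fin n) : xq K n q i * xq K n q i = 0 := by
  have := RingQuot.mkAlgHom_rel K (AqRel.sq (K := K) (q := q) i)
  simpa [xq, map_mul] using this

lemma xq_swap {i j : Fin n} (hij : j < i) :
    xq K n q i * xq K n q j = q j i • (xq K n q j * xq K n q i) := by
  have := RingQuot.mkAlgHom_rel K (AqRel.comm (K := K) (q := q) j i hij)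
  simpa [xq, map_mul, map_smul] using this

lemma xq_mul_P (i : Fin n) : ∀ (l : List (Fin n)), l.Pairwise (· < ·) →
    xq K n q i * P K n q l =
      if i ∈ l then 0
      else (∏ j ∈ l.toFinset.filter (· < i), q j i) • eS K n q (insert i l.toFinset) := by
  intro l
  induction l with
  | nil =>
    intro _
    simp only [List.not_mem_nil, if_false, List.toFinset_nil, Finset.filter_empty,
      Finset.prod_empty, one_smul, LawfulSingleton.insert_empty_eq]
    rw [eS, Finset.sort_singleton, P_cons, P_nil]
  | cons a l ih =>
    intro hsort
    have hsort' : l.Pairwise (· < ·) := hsort.of_cons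
    have ha : ∀ b ∈ l, a < b := fun b hb => List.rel_of_pairwise_cons hsort hb
    have hanl : a ∉ l := fun h => lt_irrefl a (ha a h)
    rcases lt_trichotomy i a with hia | rfl | hai
    · -- i < a : i not in list, multiply in front
      have hin : i ∉ a :: l := by
        intro h
        rcases List.mem_cons.1 h with rfl | h
        · exact lt_irrefl _ hia
        · exact absurd (hia.trans (ha _ h)) (lt_irrefl _)
      rw [if_neg hin]
      have hfl : (a :: l).toFinset.filter (· < i) = ∅ := by
        apply Finset.filter_false_of_mem
        intro k hk
        simp only [List.toFinset_cons, Finset.mem_insert, List.mem_toFinset] at hk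
        rcases hk with rfl | hk
        · exact lt_asymm hia
        · exact lt_asymm (hia.trans (ha _ hk))
      have hsl : (i :: a :: l).Pairwise (· < ·) := by
        refine List.pairwise_cons.2 ⟨?_, hsort⟩
        intro b hb
        rcases List.mem_cons.1 hb with rfl | hb
        · exact hia
        · exact hia.trans (ha _ hb)
      have : insert i (a :: l).toFinset = (i :: a :: l).toFinset := by simp
      rw [hfl, Finset.prod_empty, one_smul, this, eS, sort_eq_of_sorted n hsl,
        P_cons, P_cons]
      rw [P_cons]
    · -- i = a
      rw [P_cons, ← mul_assoc, xq_sq, zero_mul, if_pos (List.mem_cons_self)]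
    · -- a < i
      rw [P_cons, ← mul_assoc, xq_swap K n q hai, smul_mul_assoc, mul_assoc,
        ih hsort']
      by_cases hil : i ∈ l
      · rw [if_pos hil, mul_zero, smul_zero, if_pos (List.mem_cons.2 (Or.inr hil))]
      · have hin : i ∉ a :: l := by
          intro h
          rcases List.mem_cons.1 h with rfl | h
          · exact lt_irrefl _ hai
          · exact hil h
        rw [if_neg hil, if_neg hin, mul_smul_comm, smul_smul]
        -- now handle xq a * eS (insert i l.toFinset)
        have hsl : (Finset.sort (insert i l.toFinset) (· ≤ ·)).Pairwise (· < ·) :=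
          (Finset.sortedLT_sort _).pairwise
        have hmem : ∀ b ∈ Finset.sort (insert i l.toFinset) (· ≤ ·), a < b := by
          intro b hb
          rw [Finset.mem_sort] at hb
          rcases Finset.mem_insert.1 hb with rfl | hb
          · exact hai
          · exact ha _ (List.mem_toFinset.1 hb)
        have hsl2 : (a :: Finset.sort (insert i l.toFinset) (· ≤ ·)).Pairwise (· < ·) :=
          List.pairwise_cons.2 ⟨hmem, hsl⟩
        have key : xq K n q a * eS K n q (insert i l.toFinset)
            = eS K n q (insert a (insert i l.toFinset)) := by
          rw [eS, ← P_cons]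
          have : insert a (insert i l.toFinset) = (a :: Finset.sort
              (insert i l.toFinset) (· ≤ ·)).toFinset := by
            simp [Finset.sort_toFinset]
          rw [this, eS, sort_eq_of_sorted n hsl2]
        rw [key]
        congr 1
        · -- coefficients agree
          have hflt : (a :: l).toFinset.filter (· < i)
              = insert a (l.toFinset.filter (· < i)) := by
            ext k
            simp only [List.toFinset_cons, Finset.mem_filter, Finset.mem_insert,
              List.mem_toFinset]
            constructor
            · rintro ⟨rfl | hk, hk2⟩
              · exact Or.inl rfl
              · exact Or.inr ⟨hk, hk2⟩
            · rintro (rfl | ⟨hk, hk2⟩)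
              · exact ⟨Or.inl rfl, hai⟩
              · exact ⟨Or.inr hk, hk2⟩
          rw [hflt, Finset.prod_insert (by simp [hanl]), mul_comm]
        · rw [List.toFinset_cons, Finset.insert_comm]

lemma xq_mul_eS_of_mem {i : Fin n} {S : Finset (Fin n)} (h : i ∈ S) :
    xq K n q i * eS K n q S = 0 := by
  have := xq_mul_P K n q i (S.sort (· ≤ ·)) ((Finset.sortedLT_sort S).pairwise)
  rw [eS, this, if_pos ((Finset.mem_sort _).2 h)]

lemma xq_mul_eS_of_not_mem {i : Fin n} {S : Finset (Fin n)} (h : i ∉ S) :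
    xq K n q i * eS K n q S
      = (∏ j ∈ S.filter (· < i), q j i) • eS K n q (insert i S) := by
  have := xq_mul_P K n q i (S.sort (· ≤ ·)) ((Finset.sortedLT_sort S).pairwise)
  rw [eS, this, if_neg (fun hc => h ((Finset.mem_sort _).1 hc)), Finset.sort_toFinset]

lemma P_mul_eS (hq : ∀ i j : Fin n, i < j → q i j ≠ 0) :
    ∀ (l : List (Fin n)), l.Pairwise (· < ·) → ∀ S : Finset (Fin n),
    (l.toFinset ∩ S = ∅ →
      ∃ c : K, c ≠ 0 ∧ P K n q l * eS K n q S = c • eS K n q (l.toFinset ∪ S)) ∧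
    ((l.toFinset ∩ S).Nonempty → P K n q l * eS K n q S = 0) := by
  intro l
  induction l with
  | nil =>
    intro _ S
    constructor
    · intro _
      exact ⟨1, one_ne_zero, by simp [P_nil]⟩
    · intro h
      simp at h
  | cons a l ih =>
    intro hsort S
    have hsort' : l.Pairwise (· < ·) := hsort.of_cons
    have ha : ∀ b ∈ l, a < b := fun b hb => List.rel_of_pairwise_cons hsort hb
    have hanl : a ∉ l.toFinset := fun h => lt_irrefl a (ha a (List.mem_toFinset.1 h))
    have hPc : P K n q (a :: l) * eS K n q S = xq K n q a * (P K n q l * eS K n q S) := by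
      rw [P_cons, mul_assoc]
    constructor
    · intro hdisj
      have haS : a ∉ S := by
        intro haS
        have : a ∈ (a :: l).toFinset ∩ S := Finset.mem_inter.2 (by simp [haS])
        rw [hdisj] at this; exact absurd this (Finset.notMem_empty a)
      have hdisj' : l.toFinset ∩ S = ∅ := by
        rw [Finset.eq_empty_iff_forall_notMem] at hdisj ⊢
        intro k hk
        refine hdisj k ?_
        rw [Finset.mem_inter] at hk ⊢
        exact ⟨by simp [hk.1], hk.2⟩
      obtain ⟨c, hc, heq⟩ := (ih hsort' S).1 hdisj'
      have hnu : a ∉ l.toFinset ∪ S := by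
        simp [hanl, haS]
      refine ⟨c * ∏ j ∈ (l.toFinset ∪ S).filter (· < a), q j a, ?_, ?_⟩
      · refine mul_ne_zero hc (Finset.prod_ne_zero_iff.2 ?_)
        intro j hj
        exact hq j a (Finset.mem_filter.1 hj).2
      · rw [hPc, heq, mul_smul_comm, xq_mul_eS_of_not_mem K n q hnu, smul_smul]
        congr 1
        simp [Finset.insert_union]
    · intro hne
      by_cases hdisj' : (l.toFinset ∩ S).Nonempty
      · rw [hPc, (ih hsort' S).2 hdisj', mul_zero]
      · have hd : l.toFinset ∩ S = ∅ := Finset.not_nonempty_iff_eq_empty.1 hdisj'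
        obtain ⟨b, hb⟩ := hne
        rw [Finset.mem_inter] at hb
        have hbS : b ∈ S := hb.2
        have hba : b = a := by
          rcases List.mem_cons.1 (List.mem_toFinset.1 hb.1) with h | h
          · exact h
          · exfalso
            exact absurd (Finset.mem_inter.2 ⟨List.mem_toFinset.2 h, hbS⟩)
              (by rw [hd]; exact Finset.notMem_empty b)
        subst hba
        obtain ⟨c, _, heq⟩ := (ih hsort' S).1 hd
        rw [hPc, heq, mul_smul_comm,
          xq_mul_eS_of_mem K n q (Finset.mem_union_right _ hbS), smul_zero]

lemma eS_mul_eS_of_disjoint (hq : ∀ i j : Fin n, i < j → q i j ≠ 0)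
    {T S : Finset (Fin n)} (h : T ∩ S = ∅) :
    ∃ c : K, c ≠ 0 ∧ eS K n q T * eS K n q S = c • eS K n q (T ∪ S) := by
  have := (P_mul_eS K n q hq (T.sort (· ≤ ·)) ((Finset.sortedLT_sort T).pairwise) S).1
  rw [Finset.sort_toFinset] at this
  exact this h

lemma eS_mul_eS_of_inter (hq : ∀ i j : Fin n, i < j → q i j ≠ 0)
    {T S : Finset (Fin n)} (h : (T ∩ S).Nonempty) :
    eS K n q T * eS K n q S = 0 := by
  have := (P_mul_eS K n q hq (T.sort (· ≤ ·)) ((Finset.sortedLT_sort T).pairwise) S).2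
  rw [Finset.sort_toFinset] at this
  exact this h

lemma Lop_single {i : Fin n} {S : Finset (Fin n)} (h : i ∉ S) :
    Lop K n q i (Pi.single S (1:K))
      = (∏ j ∈ S.filter (· < i), q j i) • (Pi.single (insert i S) (1:K) : V K n) := by
  funext T
  simp only [Lop, LinearMap.coe_mk, AddHom.coe_mk, Pi.smul_apply, smul_eq_mul]
  by_cases hT : T = insert i S
  · subst hT
    have hiT : i ∈ insert i S := Finset.mem_insert_self i S
    rw [if_pos hiT, Finset.erase_insert h, Pi.single_eq_same, Pi.single_eq_same]
    have : (insert i S).filter (· < i) = S.filter (· < i) := by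
      rw [Finset.filter_insert, if_neg (lt_irrefl i)]
    rw [this]
  · have hr : (Pi.single (insert i S) (1:K) : V K n) T = 0 := by
      rw [Pi.single_apply, if_neg hT]
    rw [hr, mul_zero]
    by_cases hiT : i ∈ T
    · have h2 : (Pi.single S (1:K) : V K n) (T.erase i) = 0 := by
        rw [Pi.single_apply, if_neg]
        intro hTe
        exact hT (by rw [← hTe, Finset.insert_erase hiT])
      rw [if_pos hiT, h2, mul_zero]
    · rw [if_neg hiT]

lemma rep_P_single : ∀ (l : List (Fin n)), l.Pairwise (· < ·) →
    rep K n q (P K n q l) (Pi.single ∅ (1:K)) = Pi.single l.toFinset (1:K) := by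
  intro l
  induction l with
  | nil => simp [P_nil]
  | cons a l ih =>
    intro hsort
    have hsort' : l.Pairwise (· < ·) := hsort.of_cons
    have ha : ∀ b ∈ l, a < b := fun b hb => List.rel_of_pairwise_cons hsort hb
    have hanl : a ∉ l.toFinset := fun h => lt_irrefl a (ha a (List.mem_toFinset.1 h))
    rw [P_cons, map_mul, Module.End.mul_apply, ih hsort', rep_xq, Lop_single K n q hanl]
    have : l.toFinset.filter (· < a) = ∅ := by
      apply Finset.filter_false_of_mem
      intro k hk
      exact lt_asymm (ha k (List.mem_toFinset.1 hk))
    rw [this, Finset.prod_empty, one_smul, List.toFinset_cons]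

lemma rep_eS (S : Finset (Fin n)) :
    rep K n q (eS K n q S) (Pi.single ∅ (1:K)) = Pi.single S (1:K) := by
  rw [eS, rep_P_single K n q _ ((Finset.sortedLT_sort S).pairwise), Finset.sort_toFinset]

/-- Evaluation of the representation at the vacuum vector. -/
noncomputable def Phi : Aq K n q →ₗ[K] V K n where
  toFun := fun z => rep K n q z (Pi.single ∅ (1:K))
  map_add' := by intros; simp
  map_smul' := by intros; simp

lemma eS_linearIndependent : LinearIndependent K (eS K n q) := by
  apply LinearIndependent.of_comp (Phi K n q)
  have hc : (Phi K n q ∘ eS K n q) = fun S => (Pi.single S (1:K) : V K n) := by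
    funext S
    exact rep_eS K n q S
  rw [hc]
  have h2 : ⇑(Pi.basisFun K (Finset (Fin n))) = fun S => (Pi.single S (1:K) : V K n) :=
    funext fun S => Pi.basisFun_apply K _ S
  have := (Pi.basisFun K (Finset (Fin n))).linearIndependent
  rwa [h2] at this

lemma eS_span (hq : ∀ i j : Fin n, i < j → q i j ≠ 0) :
    Submodule.span K (Set.range (eS K n q)) = ⊤ := by
  set sp := Submodule.span K (Set.range (eS K n q)) with hsp
  have hmul : ∀ x ∈ sp, ∀ y ∈ sp, x * y ∈ sp := by
    intro x hx y hy
    induction hx using Submodule.span_induction with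
    | mem x hxs =>
      induction hy using Submodule.span_induction with
      | mem y hys =>
        obtain ⟨T, rfl⟩ := hxs
        obtain ⟨S, rfl⟩ := hys
        by_cases hTS : (T ∩ S).Nonempty
        · rw [eS_mul_eS_of_inter K n q hq hTS]
          exact Submodule.zero_mem _
        · obtain ⟨c, _, heq⟩ := eS_mul_eS_of_disjoint K n q hq
            (Finset.not_nonempty_iff_eq_empty.1 hTS)
          rw [heq]
          exact Submodule.smul_mem _ _ (Submodule.subset_span ⟨T ∪ S, rfl⟩)
      | zero => rw [mul_zero]; exact Submodule.zero_mem _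
      | add y z hy hz hy' hz' => rw [mul_add]; exact Submodule.add_mem _ hy' hz'
      | smul c y hy hy' => rw [mul_smul_comm]; exact Submodule.smul_mem _ _ hy'
    | zero => rw [zero_mul]; exact Submodule.zero_mem _
    | add x z hx hz hx' hz' => rw [add_mul]; exact Submodule.add_mem _ hx' hz'
    | smul c x hx hx' => rw [smul_mul_assoc]; exact Submodule.smul_mem _ _ hx'
  rw [eq_top_iff]
  rintro z -
  obtain ⟨w, rfl⟩ := RingQuot.mkAlgHom_surjective K (AqRel K n q) z
  induction w using FreeAlgebra.induction with
  | grade0 r =>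
    rw [AlgHom.commutes, Algebra.algebraMap_eq_smul_one]
    exact Submodule.smul_mem _ _
      (Submodule.subset_span ⟨∅, (eS_empty K n q).symm ▸ rfl⟩)
  | grade1 i =>
    have : RingQuot.mkAlgHom K (AqRel K n q) (FreeAlgebra.ι K i) = eS K n q {i} := by
      rw [eS, Finset.sort_singleton, P_cons, P_nil, mul_one, xq]
    rw [this]
    exact Submodule.subset_span ⟨{i}, rfl⟩
  | mul a b ha' hb' =>
    rw [map_mul]
    exact hmul _ ha' _ hb'
  | add a b ha' hb' =>
    rw [map_add]
    exact Submodule.add_mem _ ha' hb'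


/-- The monomial basis of `A(q)`. -/
noncomputable def bA (hq : ∀ i j : Fin n, i < j → q i j ≠ 0) :
    Module.Basis (Finset (Fin n)) K (Aq K n q) :=
  Module.Basis.mk (eS_linearIndependent K n q) (by rw [eS_span K n q hq])

lemma bA_apply (hq : ∀ i j : Fin n, i < j → q i j ≠ 0) (S : Finset (Fin n)) :
    bA K n q hq S = eS K n q S := Module.Basis.mk_apply _ _ _

/-- The Frobenius functional : coordinate at the top monomial. -/
noncomputable def lam (hq : ∀ i j : Fin n, i < j → q i j ≠ 0) :
    Module.Dual K (Aq K n q) := (bA K n q hq).coord Finset.univ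

lemma lam_eS (hq : ∀ i j : Fin n, i < j → q i j ≠ 0) (S : Finset (Fin n)) :
    lam K n q hq (eS K n q S) = if S = Finset.univ then 1 else 0 := by
  rw [lam, ← bA_apply K n q hq, Module.Basis.coord_apply, Module.Basis.repr_self,
    Finsupp.single_apply]

/-- The candidate Frobenius map. -/
noncomputable def phi0 (hq : ∀ i j : Fin n, i < j → q i j ≠ 0) :
    Aq K n q →ₗ[K] Module.Dual K (Aq K n q) :=
  ((LinearMap.mul K (Aq K n q)).flip).compr₂ (lam K n q hq)

lemma phi0_apply (hq : ∀ i j : Fin n, i < j → q i j ≠ 0) (x y : Aq K n q) :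
    phi0 K n q hq x y = lam K n q hq (y * x) := by
  simp [phi0, LinearMap.compr₂_apply, LinearMap.flip_apply, LinearMap.mul_apply']

lemma subset_of_compl_inter {S T : Finset (Fin n)} (h : Sᶜ ∩ T = ∅) : T ⊆ S := by
  intro a haT
  by_contra haS
  have : a ∈ Sᶜ ∩ T := Finset.mem_inter.2 ⟨Finset.mem_compl.2 haS, haT⟩
  rw [h] at this
  exact absurd this (Finset.notMem_empty a)

lemma phi0_inj (hq : ∀ i j : Fin n, i < j → q i j ≠ 0) :
    Function.Injective (phi0 K n q hq) := by
  rw [← LinearMap.ker_eq_bot, LinearMap.ker_eq_bot']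
  intro x hx
  have hrepr : ∀ S : Finset (Fin n), (bA K n q hq).repr x S = 0 := by
    intro S
    have hdisj : Sᶜ ∩ S = ∅ := by
      rw [Finset.eq_empty_iff_forall_notMem]
      intro a ha
      rw [Finset.mem_inter, Finset.mem_compl] at ha
      exact ha.1 ha.2
    obtain ⟨c, hc, heq⟩ := eS_mul_eS_of_disjoint K n q hq hdisj
    have hcompl : Sᶜ ∪ S = Finset.univ := by
      rw [Finset.eq_univ_iff_forall]
      intro a
      rw [Finset.mem_union, Finset.mem_compl]
      exact (em (a ∈ S)).symm
    have key : (lam K n q hq).comp (LinearMap.mulLeft K (eS K n q Sᶜ))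
        = c • ((bA K n q hq).coord S) := by
      apply (bA K n q hq).ext
      intro T
      have hrs : (bA K n q hq).repr (eS K n q T) = Finsupp.single T 1 := by
        rw [← bA_apply K n q hq T, Module.Basis.repr_self]
      rw [bA_apply]
      simp only [LinearMap.comp_apply, LinearMap.mulLeft_apply, LinearMap.smul_apply,
        smul_eq_mul, Module.Basis.coord_apply, hrs]
      by_cases hTS : T = S
      · subst hTS
        rw [heq, hcompl, map_smul, smul_eq_mul, lam_eS, if_pos rfl, Finsupp.single_apply]
        simp
      · rw [Finsupp.single_apply, if_neg hTS, mul_zero]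
        by_cases hint : (Sᶜ ∩ T).Nonempty
        · rw [eS_mul_eS_of_inter K n q hq hint, map_zero]
        · obtain ⟨c', _, heq'⟩ := eS_mul_eS_of_disjoint K n q hq
            (Finset.not_nonempty_iff_eq_empty.1 hint)
          have hTsubS : T ⊆ S := subset_of_compl_inter n
            (Finset.not_nonempty_iff_eq_empty.1 hint)
          have hne : Sᶜ ∪ T ≠ Finset.univ := by
            intro hcup
            apply hTS
            apply Finset.Subset.antisymm hTsubS
            intro a haS
            have : a ∈ Sᶜ ∪ T := hcup ▸ Finset.mem_univ a
            rcases Finset.mem_union.1 this with h' | h'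
            · exact absurd haS (Finset.mem_compl.1 h')
            · exact h'
          rw [heq', map_smul, smul_eq_mul, lam_eS, if_neg hne, mul_zero]
    have := congrArg (fun f : Module.Dual K (Aq K n q) => f (eS K n q Sᶜ)) hx
    simp only [LinearMap.zero_apply] at this
    rw [phi0_apply] at this
    have h2 : (lam K n q hq).comp (LinearMap.mulLeft K (eS K n q Sᶜ)) x = 0 := this
    rw [key] at h2
    simp only [LinearMap.smul_apply, smul_eq_mul, Module.Basis.coord_apply] at h2
    exact (mul_eq_zero.1 h2).resolve_left hc
  have : (bA K n q hq).repr x = 0 := Finsupp.ext hrepr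
  simpa using congrArg ((bA K n q hq).repr.symm) this

/-- The Frobenius linear equivalence. -/
noncomputable def phiE (hq : ∀ i j : Fin n, i < j → q i j ≠ 0) :
    Aq K n q ≃ₗ[K] Module.Dual K (Aq K n q) :=
  haveI : FiniteDimensional K (Aq K n q) := Module.Finite.of_basis (bA K n q hq)
  LinearMap.linearEquivOfInjective (phi0 K n q hq) (phi0_inj K n q hq)
    (Subspace.dual_finrank_eq).symm

lemma phiE_apply (hq : ∀ i j : Fin n, i < j → q i j ≠ 0) (x : Aq K n q) :
    phiE K n q hq x = phi0 K n q hq x := by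
  haveI : FiniteDimensional K (Aq K n q) := Module.Finite.of_basis (bA K n q hq)
  exact LinearMap.linearEquivOfInjective_apply _ _ _

lemma P_ite (g : Fin n → ZMod 2) :
    ∀ (l : List (Fin n)), l.Pairwise (· < ·) →
      ((l.map (fun i => if g i = 1 then xq K n q i else 1)).prod
        = eS K n q (l.toFinset.filter (fun i => g i = 1))) := by
  intro l
  induction l with
  | nil => simp [eS_empty]
  | cons a l ih =>
    intro hsort
    have hsort' : l.Pairwise (· < ·) := hsort.of_cons
    have ha : ∀ b ∈ l, a < b := fun b hb => List.rel_of_pairwise_cons hsort hb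
    have hanl : a ∉ l.toFinset := fun h => lt_irrefl a (ha a (List.mem_toFinset.1 h))
    rw [List.map_cons, List.prod_cons, ih hsort']
    have hfc : (a :: l).toFinset.filter (fun i => g i = 1)
        = if g a = 1 then insert a (l.toFinset.filter (fun i => g i = 1))
          else l.toFinset.filter (fun i => g i = 1) := by
      rw [List.toFinset_cons, Finset.filter_insert]
    by_cases hg : g a = 1
    · rw [if_pos hg, hfc, if_pos hg]
      have hnm : a ∉ l.toFinset.filter (fun i => g i = 1) :=
        fun h => hanl (Finset.mem_filter.1 h).1
      rw [xq_mul_eS_of_not_mem K n q hnm]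
      have : (l.toFinset.filter (fun i => g i = 1)).filter (· < a) = ∅ := by
        apply Finset.filter_false_of_mem
        intro k hk
        exact lt_asymm (ha k (List.mem_toFinset.1 (Finset.mem_filter.1 hk).1))
      rw [this, Finset.prod_empty, one_smul]
    · rw [if_neg hg, hfc, if_neg hg, one_mul]

lemma eq'_eq (g : Fin n → ZMod 2) :
    eq' K n q g = eS K n q (Finset.univ.filter (fun i => g i = 1)) := by
  have hs : (List.finRange n).Pairwise (· < ·) := by
    have := List.pairwise_lt_finRange n
    exact this
  rw [eq', P_ite K n q g (List.finRange n) hs, List.toFinset_finRange]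

lemma mem_grade (S : Finset (Fin n)) :
    eS K n q S ∈ AqGradeZ K n q (S.card : ℤ) := by
  apply Submodule.subset_span
  refine ⟨fun i => if i ∈ S then 1 else 0, ?_, ?_⟩
  · show ((Finset.univ.filter fun i => (if i ∈ S then (1:ZMod 2) else 0) = 1).card : ℤ)
      = (S.card : ℤ)
    congr 2
    ext i
    by_cases h : i ∈ S <;> simp [h]
  · rw [eq'_eq]
    congr 1
    ext i
    by_cases h : i ∈ S <;> simp [h]

lemma pairing_vanish (hq : ∀ i j : Fin n, i < j → q i j ≠ 0)
    {S1 S2 : Finset (Fin n)} (h : (S1.card : ℤ) + (S2.card : ℤ) ≠ (n : ℤ)) :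
    lam K n q hq (eS K n q S1 * eS K n q S2) = 0 := by
  by_cases hint : (S1 ∩ S2).Nonempty
  · rw [eS_mul_eS_of_inter K n q hq hint, map_zero]
  · obtain ⟨c, _, heq⟩ := eS_mul_eS_of_disjoint K n q hq
      (Finset.not_nonempty_iff_eq_empty.1 hint)
    have hdisj : Disjoint S1 S2 :=
      Finset.disjoint_iff_inter_eq_empty.2 (Finset.not_nonempty_iff_eq_empty.1 hint)
    have hne : S1 ∪ S2 ≠ Finset.univ := by
      intro hc
      apply h
      have := Finset.card_union_of_disjoint hdisj
      rw [hc, Finset.card_univ, Fintype.card_fin] at this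
      omega
    rw [heq, map_smul, smul_eq_mul, lam_eS, if_neg hne, mul_zero]

end AqAux

/-- **Proposition C (iii).**  With its `ℤ`-grading, `A(q)` is `n`-graded Frobenius, and
it is not `j`-graded Frobenius for any integer `j ≠ n`. -/
theorem stmt10 (K : Type) [Field K] (n : ℕ) (hn : 2 ≤ n)
    (q : Fin n → Fin n → K) (hq : ∀ i j : Fin n, i < j → q i j ≠ 0) :
    AqZFrobenius K n q (n : ℤ) ∧ ∀ j : ℤ, j ≠ (n : ℤ) → ¬ AqZFrobenius K n q j := by
  classical
  constructor
  · refine ⟨AqAux.phiE K n q hq, ?_, ?_⟩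
    · intro a x y
      rw [AqAux.phiE_apply, AqAux.phiE_apply, AqAux.phi0_apply, AqAux.phi0_apply, mul_assoc]
    · intro d x hx h hne y hy
      rw [AqAux.phiE_apply, AqAux.phi0_apply]
      rw [AqGradeZ] at hx hy
      induction hy using Submodule.span_induction with
      | mem y hys =>
        induction hx using Submodule.span_induction with
        | mem x hxs =>
          obtain ⟨g, hg, rfl⟩ := hxs
          obtain ⟨g', hg', rfl⟩ := hys
          rw [AqAux.eq'_eq, AqAux.eq'_eq]
          apply AqAux.pairing_vanish K n q hq
          rw [Set.mem_setOf_eq] at hg hg'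
          rw [hg, hg']
          omega
        | zero => rw [mul_zero, map_zero]
        | add x1 x2 _ _ hx1' hx2' => rw [mul_add, map_add, hx1', hx2', add_zero]
        | smul c x1 _ hx1' => rw [mul_smul_comm, map_smul, hx1', smul_zero]
      | zero => rw [zero_mul, map_zero]
      | add y1 y2 _ _ hy1' hy2' => rw [add_mul, map_add, hy1', hy2', add_zero]
      | smul c y1 _ hy1' => rw [smul_mul_assoc, map_smul, hy1', smul_zero]
  · rintro j hj ⟨φ, hmulφ, hgr⟩
    have h1mem : (1 : Aq K n q) ∈ AqGradeZ K n q 0 := by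
      have := AqAux.mem_grade K n q (∅ : Finset (Fin n))
      simpa [AqAux.eS_empty] using this
    have htop : AqAux.eS K n q Finset.univ ∈ AqGradeZ K n q (n : ℤ) := by
      have := AqAux.mem_grade K n q (Finset.univ : Finset (Fin n))
      simpa using this
    have hcard : ∀ S : Finset (Fin n), ((S.card : ℤ) ≤ (n : ℤ)) := by
      intro S
      have h3 : S.card ≤ n := by simpa using Finset.card_le_univ S
      exact_mod_cast h3
    have hallS : ∀ x : Aq K n q, (∀ S : Finset (Fin n), φ x (AqAux.eS K n q S) = 0) →
        x = 0 := by
      intro x hxs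
      have hz : φ x = 0 := by
        apply (AqAux.bA K n q hq).ext
        intro S
        rw [AqAux.bA_apply]
        simpa using hxs S
      exact (LinearEquiv.map_eq_zero_iff φ).1 hz
    by_cases hcase : 0 ≤ j ∧ j ≤ (n : ℤ)
    · have hjn : j < (n : ℤ) := lt_of_le_of_ne hcase.2 hj
      have hxmem : AqAux.eS K n q Finset.univ ∈ AqGradeZ K n q (((n:ℤ) - j) + j) := by
        simpa [sub_add_cancel] using htop
      have hz : AqAux.eS K n q Finset.univ = 0 := by
        apply hallS
        intro S
        refine hgr ((n:ℤ) - j) _ hxmem ((S.card : ℤ)) ?_ _ (AqAux.mem_grade K n q S)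
        have : (0:ℤ) ≤ (S.card : ℤ) := Int.ofNat_nonneg _
        omega
      refine absurd hz ?_
      have := (AqAux.bA K n q hq).ne_zero Finset.univ
      rwa [AqAux.bA_apply] at this
    · have hxmem : (1 : Aq K n q) ∈ AqGradeZ K n q ((-j) + j) := by
        simpa using h1mem
      have hz : (1 : Aq K n q) = 0 := by
        apply hallS
        intro S
        refine hgr (-j) _ hxmem ((S.card : ℤ)) ?_ _ (AqAux.mem_grade K n q S)
        have h1 : (0:ℤ) ≤ (S.card : ℤ) := Int.ofNat_nonneg _
        have h2 := hcard S
        push_neg at hcase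
        by_cases h0 : 0 ≤ j
        · have := hcase h0
          omega
        · omega
      refine absurd hz ?_
      have := (AqAux.bA K n q hq).ne_zero ∅
      rwa [AqAux.bA_apply, AqAux.eS_empty] at this
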